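/- Let X ≥ 2 and for each prime p set b_p = 2 h(log p / log X) (log p)/√p, where h(t) = max(1−|t|,0). Then ∑_{100 < p ≤ X} b_p² = (log X)²/3 + O(log X). -/

import Mathlib

open Real Finset ArithmeticFunction MeasureTheory


-- L1: lower bound for log factorial
lemma sum_log_ge (N : ℕ) : (N:ℝ) * Real.log N - N ≤ ∑ n ∈ Finset.Icc 1 N, Real.log n := by
  induction N with
  | zero => simp
  | succ N ih =>
    rw [Finset.sum_Icc_succ_top (by omega)]
    have key : (N:ℝ) * Real.log (N+1) ≤ (N:ℝ) * Real.log N + 1 := by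
      rcases Nat.eq_zero_or_pos N with h | h
      · simp [h]
      · have hN : (0:ℝ) < N := by exact_mod_cast h
        have : Real.log ((N+1)/N) ≤ (N+1)/N - 1 :=
          Real.log_le_sub_one_of_pos (by positivity)
        rw [Real.log_div (by positivity) (by positivity)] at this
        have h2 : Real.log (N+1) - Real.log N ≤ 1/N := by
          have : ((N:ℝ)+1)/N - 1 = 1/N := by field_simp; ring
          linarith [this, this]
        calc (N:ℝ) * Real.log (N+1) = N * Real.log N + N * (Real.log (N+1) - Real.log N) := by ring
          _ ≤ N * Real.log N + N * (1/N) := by nlinarith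
          _ ≤ N * Real.log N + 1 := by rw [mul_one_div]; rw [div_self hN.ne']
    push_cast
    nlinarith []

-- L2: upper bound
lemma sum_log_le (N : ℕ) : ∑ n ∈ Finset.Icc 1 N, Real.log n ≤ (N:ℝ) * Real.log N := by
  calc ∑ n ∈ Finset.Icc 1 N, Real.log n ≤ ∑ n ∈ Finset.Icc 1 N, Real.log N := by
        apply Finset.sum_le_sum
        intro i hi
        simp only [Finset.mem_Icc] at hi
        exact Real.log_le_log (by exact_mod_cast hi.1) (by exact_mod_cast hi.2)
    _ = (N:ℝ) * Real.log N := by rw [Finset.sum_const, Nat.card_Icc]; simp [nsmul_eq_mul]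

-- L4: Chebyshev theta bound
lemma theta_le (N : ℕ) : ∑ p ∈ (Finset.Icc 1 N).filter Nat.Prime, Real.log p ≤ (N:ℝ) * Real.log 4 := by
  have h1 : (Finset.Icc 1 N).filter Nat.Prime = (Finset.range (N+1)).filter Nat.Prime := by
    ext p
    simp only [Finset.mem_filter, Finset.mem_Icc, Finset.mem_range]
    constructor
    · rintro ⟨⟨h1, h2⟩, hp⟩; exact ⟨by omega, hp⟩
    · rintro ⟨h1, hp⟩; exact ⟨⟨hp.one_lt.le, by omega⟩, hp⟩
  rw [h1]
  have h2 : ∑ p ∈ (Finset.range (N+1)).filter Nat.Prime, Real.log p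
      = Real.log (primorial N) := by
    rw [primorial]
    push_cast
    rw [← Real.log_prod]
    intro p hp
    simp only [Finset.mem_filter] at hp
    exact_mod_cast hp.2.pos.ne'
  rw [h2]
  calc Real.log (primorial N) ≤ Real.log (4^N) := by
        apply Real.log_le_log (by exact_mod_cast primorial_pos N)
        exact_mod_cast primorial_le_4_pow N
    _ = (N:ℝ) * Real.log 4 := by rw [Real.log_pow]

lemma log_le_two_sqrt {x : ℝ} (hx : 1 ≤ x) : Real.log x ≤ 2 * Real.sqrt x := by
  have h0 : (0:ℝ) < x := by linarith
  have h1 : Real.log x = 2 * Real.log (Real.sqrt x) := by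
    rw [Real.log_sqrt h0.le]; ring
  have h2 : Real.log (Real.sqrt x) ≤ Real.sqrt x - 1 :=
    Real.log_le_sub_one_of_pos (Real.sqrt_pos.mpr h0)
  nlinarith [Real.sqrt_nonneg x]

lemma sum_inv_msqrt (N : ℕ) : ∑ m ∈ Finset.Icc 2 N, 1/((m:ℝ) * Real.sqrt m) ≤ 2 := by
  have key : ∀ N : ℕ, 1 ≤ N → ∑ m ∈ Finset.Icc 2 N, 1/((m:ℝ) * Real.sqrt m) ≤ 2 - 2/Real.sqrt N := by
    intro N hN
    induction N with
    | zero => omega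
    | succ N ih =>
      rcases Nat.lt_or_ge N 1 with h | h
      · interval_cases N
        · simp
      · have hstep := ih h
        rw [Finset.sum_Icc_succ_top (by omega)]
        have ha : (0:ℝ) < Real.sqrt N := Real.sqrt_pos.mpr (by exact_mod_cast h)
        have hb : (0:ℝ) < Real.sqrt (N+1) := Real.sqrt_pos.mpr (by positivity)
        have hab : Real.sqrt N ≤ Real.sqrt (N+1) := Real.sqrt_le_sqrt (by push_cast; linarith)
        have ha2 : Real.sqrt N ^ 2 = N := Real.sq_sqrt (by positivity)
        have hb2 : Real.sqrt (N+1) ^ 2 = (N:ℝ)+1 := by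
          rw [Real.sq_sqrt (by positivity)]
        have key2 : 1/(((N:ℝ)+1) * Real.sqrt (N+1)) ≤ 2/Real.sqrt N - 2/Real.sqrt (N+1) := by
          rw [div_sub_div _ _ ha.ne' hb.ne', div_le_div_iff₀ (by positivity) (by positivity)]
          have hd : (Real.sqrt (N+1) - Real.sqrt N) * (Real.sqrt (N+1) + Real.sqrt N) = 1 := by
            nlinarith
          nlinarith [mul_pos ha hb, mul_pos (mul_pos hb hb) hb,
            mul_nonneg (mul_nonneg (sub_nonneg.mpr hab) hb.le) hb.le,
            mul_nonneg (sub_nonneg.mpr hab) (mul_pos hb hb).le]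
        push_cast
        push_cast at hstep key2
        linarith
  rcases Nat.lt_or_ge N 1 with h | h
  · interval_cases N
    · simp
  · have := key N h
    have : (0:ℝ) < Real.sqrt N := Real.sqrt_pos.mpr (by exact_mod_cast h)
    have h2 : 0 < 2/Real.sqrt N := by positivity
    linarith [key N h]

lemma sum_log_eq (N : ℕ) :
    ∑ n ∈ Finset.Icc 1 N, Real.log n
      = ∑ d ∈ Finset.Icc 1 N, Λ d * ((N / d : ℕ) : ℝ) := by
  have h1 : ∀ n ∈ Finset.Icc 1 N, Real.log n = ∑ d ∈ (Finset.Icc 1 N).filter (· ∣ n), Λ d := by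
    intro n hn
    simp only [Finset.mem_Icc] at hn
    have : (Finset.Icc 1 N).filter (· ∣ n) = n.divisors := by
      ext d
      simp only [Finset.mem_filter, Finset.mem_Icc, Nat.mem_divisors]
      constructor
      · rintro ⟨⟨hd1, hd2⟩, hdn⟩; exact ⟨hdn, by omega⟩
      · rintro ⟨hdn, hn0⟩
        refine ⟨⟨Nat.pos_of_dvd_of_pos hdn (by omega), le_trans (Nat.le_of_dvd (by omega) hdn) hn.2⟩, hdn⟩
    rw [this, ArithmeticFunction.vonMangoldt_sum]
  rw [Finset.sum_congr rfl h1]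
  simp_rw [Finset.sum_filter]
  rw [Finset.sum_comm]
  apply Finset.sum_congr rfl
  intro d hd
  rw [← Finset.sum_filter]
  rw [Finset.sum_const]
  have : (Finset.Icc 1 N).filter (fun n => d ∣ n) = (Finset.Ioc 0 N).filter (fun n => d ∣ n) := by
    rw [show Finset.Icc 1 N = Finset.Ioc 0 N from Finset.Icc_add_one_left_eq_Ioc 0 N]
  rw [this, Nat.Ioc_filter_dvd_card_eq_div]
  simp [nsmul_eq_mul, mul_comm]


lemma tail_bound (N : ℕ) :
    ∑ d ∈ (Finset.Icc 1 N).filter (fun d => ¬ d.Prime), Λ d / d ≤ 8 := by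
  classical
  set S := (Finset.Icc 1 N).filter (fun d => ¬ d.Prime) with hS
  set S' := S.filter (fun d => Λ d ≠ 0) with hS'
  have step1 : ∑ d ∈ S, Λ d / d = ∑ d ∈ S', Λ d / d := by
    refine (Finset.sum_filter_of_ne ?_).symm
    intro d _ hd h
    rw [h] at hd
    simp at hd
  set T := ((Finset.Icc 1 N).filter Nat.Prime) ×ˢ (Finset.Icc 2 N) with hT
  have step2 : S' ⊆ T.image (fun x => x.1 ^ x.2) := by
    intro d hd
    simp only [hS', hS, Finset.mem_filter, Finset.mem_Icc] at hd
    obtain ⟨⟨⟨hd1, hd2⟩, hdp⟩, hdΛ⟩ := hd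
    have hpp : IsPrimePow d := ArithmeticFunction.vonMangoldt_ne_zero_iff.mp hdΛ
    obtain ⟨p, k, hp, hk, hpk⟩ := hpp
    rw [← Nat.prime_iff] at hp
    have hk2 : 2 ≤ k := by
      rcases Nat.lt_or_ge k 2 with h | h
      · exfalso
        have hk1 : k = 1 := by omega
        rw [hk1, pow_one] at hpk
        exact hdp (hpk ▸ hp)
      · exact h
    rw [Finset.mem_image]
    refine ⟨(p, k), ?_, hpk⟩
    rw [hT, Finset.mem_product, Finset.mem_filter, Finset.mem_Icc, Finset.mem_Icc]
    refine ⟨⟨⟨hp.one_lt.le, ?_⟩, hp⟩, hk2, ?_⟩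
    · calc p ≤ p ^ k := Nat.le_self_pow (by omega) p
        _ = d := hpk
        _ ≤ N := hd2
    · show k ≤ N
      calc k ≤ 2 ^ k := (Nat.lt_two_pow_self (n := k)).le
        _ ≤ p ^ k := Nat.pow_le_pow_left hp.two_le k
        _ = d := hpk
        _ ≤ N := hd2
  have hinj : Set.InjOn (fun x : ℕ × ℕ => x.1 ^ x.2) T := by
    rintro ⟨p, k⟩ hpk ⟨q, j⟩ hqj h
    simp only [hT, Finset.coe_product, Finset.mem_product, Finset.coe_filter,
      Set.mem_prod, Set.mem_setOf_eq, Finset.mem_coe, Finset.mem_Icc] at hpk hqj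
    have hp := hpk.1.2
    have hq := hqj.1.2
    simp only at h
    have hk0 : k ≠ 0 := by omega
    have hj0 : j ≠ 0 := by omega
    have hpq : p = q := by
      have h1 : p ∣ q ^ j := h ▸ dvd_pow_self p hk0
      have h2 : p ∣ q := hp.dvd_of_dvd_pow h1
      exact ((Nat.prime_dvd_prime_iff_eq hp hq).mp h2)
    subst hpq
    have : k = j := Nat.pow_right_injective hp.two_le h
    simp [this]
  have step3 : ∑ d ∈ S', Λ d / d ≤ ∑ d ∈ T.image (fun x => x.1 ^ x.2), Λ d / d := by
    apply Finset.sum_le_sum_of_subset_of_nonneg step2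
    intro d _ _
    exact div_nonneg ArithmeticFunction.vonMangoldt_nonneg (Nat.cast_nonneg _)
  have step4 : ∑ d ∈ T.image (fun x => x.1 ^ x.2), Λ d / d
      = ∑ x ∈ T, Real.log x.1 / (x.1:ℝ) ^ x.2 := by
    rw [Finset.sum_image hinj]
    apply Finset.sum_congr rfl
    rintro ⟨p, k⟩ hpk
    simp only [hT, Finset.mem_product, Finset.mem_filter, Finset.mem_Icc] at hpk
    have hk0 : k ≠ 0 := by omega
    rw [ArithmeticFunction.vonMangoldt_apply_pow hk0,
      ArithmeticFunction.vonMangoldt_apply_prime hpk.1.2]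
    push_cast
    rfl
  have step5 : ∑ x ∈ T, Real.log x.1 / (x.1:ℝ) ^ x.2
      ≤ ∑ p ∈ (Finset.Icc 1 N).filter Nat.Prime, Real.log p * (2 / (p:ℝ)^2) := by
    rw [hT, Finset.sum_product]
    apply Finset.sum_le_sum
    intro p hp
    simp only [Finset.mem_filter, Finset.mem_Icc] at hp
    have hp2 : (2:ℝ) ≤ p := by exact_mod_cast hp.2.two_le
    have hp0 : (0:ℝ) < p := by linarith
    have hlog : 0 ≤ Real.log p := Real.log_nonneg (by linarith)
    simp_rw [div_eq_mul_inv, ← Finset.mul_sum]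
    apply mul_le_mul_of_nonneg_left _ hlog
    have hgeom : ∑ k ∈ Finset.Icc 2 N, ((p:ℝ)^k)⁻¹ ≤ 2 / (p:ℝ)^2 := by
      have hr : (0:ℝ) < (p:ℝ)⁻¹ := by positivity
      have hr2 : (p:ℝ)⁻¹ ≤ 1/2 := by
        rw [inv_le_comm₀ hp0 (by norm_num)]
        linarith
      have hr1 : (p:ℝ)⁻¹ < 1 := lt_of_le_of_lt hr2 (by norm_num)
      simp_rw [← inv_pow]
      rcases Nat.lt_or_ge N 2 with h | h
      · rw [Finset.Icc_eq_empty (by omega)]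
        simp
        positivity
      · rw [show Finset.Icc 2 N = Finset.Ico 2 (N+1) by rw [Finset.Ico_add_one_right_eq_Icc]]
        rw [geom_sum_Ico hr1.ne (by omega)]
        have heq : (((p:ℝ)⁻¹)^(N+1) - ((p:ℝ)⁻¹)^2)/((p:ℝ)⁻¹ - 1)
            = (((p:ℝ)⁻¹)^2 - ((p:ℝ)⁻¹)^(N+1))/(1 - (p:ℝ)⁻¹) := by
          rw [← neg_div_neg_eq]
          congr 1 <;> ring
        rw [heq, div_le_iff₀ (by linarith)]
        have h2 : (2:ℝ)/(p:ℝ)^2 = 2 * ((p:ℝ)⁻¹)^2 := by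
          rw [inv_pow]
          ring
        rw [h2]
        nlinarith [pow_nonneg hr.le (N+1),
          mul_nonneg (mul_nonneg hr.le hr.le) (by linarith : (0:ℝ) ≤ 1 - 2*(p:ℝ)⁻¹)]
    calc ∑ k ∈ Finset.Icc 2 N, ((p:ℝ)^k)⁻¹ ≤ 2/(p:ℝ)^2 := hgeom
      _ = 2 * ((p:ℝ)^2)⁻¹ := by ring
      _ = (2/(p:ℝ)^2) := by ring
  have step6 : ∑ p ∈ (Finset.Icc 1 N).filter Nat.Prime, Real.log p * (2 / (p:ℝ)^2)
      ≤ ∑ m ∈ Finset.Icc 2 N, Real.log m * (2 / (m:ℝ)^2) := by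
    apply Finset.sum_le_sum_of_subset_of_nonneg
    · intro p hp
      simp only [Finset.mem_filter, Finset.mem_Icc] at hp ⊢
      exact ⟨hp.2.two_le, hp.1.2⟩
    · intro m hm _
      simp only [Finset.mem_Icc] at hm
      have : (1:ℝ) ≤ m := by exact_mod_cast le_trans (by norm_num) hm.1
      have := Real.log_nonneg this
      positivity
  have step7 : ∑ m ∈ Finset.Icc 2 N, Real.log m * (2 / (m:ℝ)^2)
      ≤ ∑ m ∈ Finset.Icc 2 N, 4 * (1/((m:ℝ) * Real.sqrt m)) := by
    apply Finset.sum_le_sum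
    intro m hm
    simp only [Finset.mem_Icc] at hm
    have hm1 : (1:ℝ) ≤ m := by exact_mod_cast le_trans (by norm_num) hm.1
    have hm0 : (0:ℝ) < m := by linarith
    have hs : (0:ℝ) < Real.sqrt m := Real.sqrt_pos.mpr hm0
    have hs2 : Real.sqrt m ^ 2 = (m:ℝ) := Real.sq_sqrt hm0.le
    have hlog := log_le_two_sqrt hm1
    have hms : Real.sqrt m * Real.sqrt m = (m:ℝ) := Real.mul_self_sqrt hm0.le
    have h1 : Real.log m * (2/(m:ℝ)^2) ≤ (2*Real.sqrt m) * (2/(m:ℝ)^2) :=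
      mul_le_mul_of_nonneg_right hlog (by positivity)
    have h2 : (2*Real.sqrt m) * (2/(m:ℝ)^2) = 4*(1/((m:ℝ)*Real.sqrt m)) := by
      field_simp
      nlinarith [hms]
    linarith
  have step8 : ∑ m ∈ Finset.Icc 2 N, 4 * (1/((m:ℝ) * Real.sqrt m)) ≤ 8 := by
    rw [← Finset.mul_sum]
    have := sum_inv_msqrt N
    linarith
  calc ∑ d ∈ S, Λ d / (d:ℝ) = ∑ d ∈ S', Λ d / d := step1
    _ ≤ _ := step3
    _ = _ := step4
    _ ≤ _ := step5
    _ ≤ _ := step6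
    _ ≤ _ := step7
    _ ≤ 8 := step8


lemma mertens (N : ℕ) (hN : 1 ≤ N) :
    |(∑ p ∈ (Finset.Icc 1 N).filter Nat.Prime, Real.log p / p) - Real.log N| ≤ 11 := by
  classical
  set M := ∑ p ∈ (Finset.Icc 1 N).filter Nat.Prime, Real.log p / p with hM
  have hN0 : (0:ℝ) < N := by exact_mod_cast hN
  have hsplit : ∑ d ∈ Finset.Icc 1 N, Λ d * ((N / d : ℕ) : ℝ)
      = (∑ p ∈ (Finset.Icc 1 N).filter Nat.Prime, Λ p * ((N / p : ℕ) : ℝ))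
        + ∑ d ∈ (Finset.Icc 1 N).filter (fun d => ¬ d.Prime), Λ d * ((N / d : ℕ) : ℝ) :=
    (Finset.sum_filter_add_sum_filter_not _ _ _).symm
  set A := ∑ p ∈ (Finset.Icc 1 N).filter Nat.Prime, Λ p * ((N / p : ℕ) : ℝ) with hA
  set B := ∑ d ∈ (Finset.Icc 1 N).filter (fun d => ¬ d.Prime), Λ d * ((N / d : ℕ) : ℝ) with hB
  -- bounds on B
  have hB0 : 0 ≤ B := by
    apply Finset.sum_nonneg
    intro d _
    exact mul_nonneg ArithmeticFunction.vonMangoldt_nonneg (Nat.cast_nonneg _)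
  have hB8 : B ≤ 8 * N := by
    have : B ≤ ∑ d ∈ (Finset.Icc 1 N).filter (fun d => ¬ d.Prime), (N:ℝ) * (Λ d / d) := by
      apply Finset.sum_le_sum
      intro d hd
      simp only [Finset.mem_filter, Finset.mem_Icc] at hd
      have hd0 : (0:ℝ) < d := by exact_mod_cast hd.1.1
      calc Λ d * ((N / d : ℕ) : ℝ) ≤ Λ d * ((N:ℝ)/d) :=
            mul_le_mul_of_nonneg_left Nat.cast_div_le ArithmeticFunction.vonMangoldt_nonneg
        _ = (N:ℝ) * (Λ d / d) := by field_simp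
    rw [← Finset.mul_sum] at this
    calc B ≤ (N:ℝ) * ∑ d ∈ (Finset.Icc 1 N).filter (fun d => ¬ d.Prime), Λ d / d := this
      _ ≤ (N:ℝ) * 8 := mul_le_mul_of_nonneg_left (tail_bound N) hN0.le
      _ = 8 * N := by ring
  -- bounds on A
  have hAupper : A ≤ (N:ℝ) * M := by
    rw [hA, hM, Finset.mul_sum]
    apply Finset.sum_le_sum
    intro p hp
    simp only [Finset.mem_filter, Finset.mem_Icc] at hp
    have hp0 : (0:ℝ) < p := by exact_mod_cast hp.2.pos
    rw [ArithmeticFunction.vonMangoldt_apply_prime hp.2]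
    have hlog : 0 ≤ Real.log p := Real.log_nonneg (by exact_mod_cast hp.2.one_lt.le)
    calc Real.log p * ((N / p : ℕ) : ℝ) ≤ Real.log p * ((N:ℝ)/p) :=
          mul_le_mul_of_nonneg_left Nat.cast_div_le hlog
      _ = (N:ℝ) * (Real.log p / p) := by field_simp
  have hAlower : (N:ℝ) * M - (N:ℝ) * Real.log 4 ≤ A := by
    have h1 : ∀ p ∈ (Finset.Icc 1 N).filter Nat.Prime,
        (N:ℝ) * (Real.log p / p) - Real.log p ≤ Λ p * ((N / p : ℕ) : ℝ) := by
      intro p hp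
      simp only [Finset.mem_filter, Finset.mem_Icc] at hp
      have hppos := hp.2.pos
      have hp0 : (0:ℝ) < p := by exact_mod_cast hppos
      have hlog : 0 ≤ Real.log p := Real.log_nonneg (by exact_mod_cast hp.2.one_lt.le)
      rw [ArithmeticFunction.vonMangoldt_apply_prime hp.2]
      have hnat : N < p * (N / p) + p := by
        have h1 := Nat.div_add_mod N p
        have h2 := Nat.mod_lt N hppos
        omega
      have hcast : (N:ℝ)/p - 1 ≤ ((N / p : ℕ) : ℝ) := by
        have : (N:ℝ) < p * ((N / p : ℕ) : ℝ) + p := by exact_mod_cast hnat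
        rw [div_sub_one hp0.ne', div_le_iff₀ hp0]
        nlinarith
      calc (N:ℝ) * (Real.log p / p) - Real.log p = Real.log p * ((N:ℝ)/p - 1) := by
            field_simp
        _ ≤ Real.log p * ((N / p : ℕ) : ℝ) := mul_le_mul_of_nonneg_left hcast hlog
    have h2 := Finset.sum_le_sum h1
    rw [Finset.sum_sub_distrib] at h2
    rw [← Finset.mul_sum] at h2
    have h3 := theta_le N
    rw [hA]
    rw [hM]
    linarith
  -- combine
  have key : A + B = ∑ n ∈ Finset.Icc 1 N, Real.log n := by
    rw [sum_log_eq N, hsplit]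
  have hup : M ≤ Real.log N + Real.log 4 := by
    have h1 : (N:ℝ) * M - (N:ℝ) * Real.log 4 ≤ (N:ℝ) * Real.log N := by
      have := sum_log_le N
      linarith
    rw [← sub_le_iff_le_add]
    have := (div_le_div_iff_of_pos_right hN0).mpr h1
    calc M - Real.log 4 = ((N:ℝ) * M - (N:ℝ) * Real.log 4)/N := by field_simp
      _ ≤ ((N:ℝ) * Real.log N)/N := by
          gcongr
      _ = Real.log N := by field_simp
  have hlo : Real.log N - 9 ≤ M := by
    have h1 : (N:ℝ) * Real.log N - (N:ℝ) - 8*N ≤ (N:ℝ) * M := by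
      have := sum_log_ge N
      linarith
    calc Real.log N - 9 = ((N:ℝ) * Real.log N - (N:ℝ) - 8*N)/N := by field_simp; ring
      _ ≤ ((N:ℝ) * M)/N := by gcongr
      _ = M := by field_simp
  have hlog4 : Real.log 4 ≤ 3 := by
    have := Real.log_le_sub_one_of_pos (by norm_num : (0:ℝ) < 4)
    linarith
  rw [abs_le]
  constructor <;> linarith


noncomputable def cc : ℕ → ℝ := fun k => if 100 < k ∧ k.Prime then Real.log k / k else 0

lemma cc_nonneg (k : ℕ) : 0 ≤ cc k := by
  unfold cc
  split
  · rename_i h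
    have : (1:ℝ) ≤ k := by exact_mod_cast h.2.one_lt.le
    have := Real.log_nonneg this
    positivity
  · exact le_refl 0

lemma log101_le : Real.log 101 ≤ 5 := by
  rw [Real.log_le_iff_le_exp (by norm_num)]
  have h1 : (2.7:ℝ)^5 ≤ Real.exp 1 ^ 5 := by
    apply pow_le_pow_left₀ (by norm_num)
    exact (Real.exp_one_gt_d9.le.trans' (by norm_num))
  rw [show (5:ℝ) = ((5:ℕ):ℝ) by norm_num, ← Real.exp_one_pow]
  nlinarith [h1]

lemma log2_le : Real.log 2 ≤ 1 := by
  have := Real.log_two_lt_d9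
  linarith

-- sum of cc over Icc 0 m equals sum over primes in Ioc 100 m
lemma cc_sum_eq (m : ℕ) :
    ∑ k ∈ Finset.Icc 0 m, cc k
      = ∑ p ∈ (Finset.Ioc 100 m).filter Nat.Prime, Real.log p / p := by
  rw [show (∑ k ∈ Finset.Icc 0 m, cc k)
      = ∑ k ∈ (Finset.Icc 0 m).filter (fun k => 100 < k ∧ k.Prime), Real.log k / k from ?_]
  · apply Finset.sum_congr ?_ (fun _ _ => rfl)
    ext k
    simp only [Finset.mem_filter, Finset.mem_Icc, Finset.mem_Ioc]
    constructor
    · rintro ⟨⟨_, h2⟩, h3, h4⟩; exact ⟨⟨h3, h2⟩, h4⟩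
    · rintro ⟨⟨h3, h2⟩, h4⟩; exact ⟨⟨Nat.zero_le _, h2⟩, h3, h4⟩
  · rw [Finset.sum_filter]
    apply Finset.sum_congr rfl
    intro k _
    unfold cc
    split <;> rfl

lemma cc_sum_split (m : ℕ) (hm : 100 ≤ m) :
    ∑ k ∈ Finset.Icc 0 m, cc k
      = (∑ p ∈ (Finset.Icc 1 m).filter Nat.Prime, Real.log p / p)
        - ∑ p ∈ (Finset.Icc 1 100).filter Nat.Prime, Real.log p / p := by
  rw [cc_sum_eq]
  have hsplit : Finset.Icc 1 m = Finset.Icc 1 100 ∪ Finset.Ioc 100 m := by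
    ext k
    simp only [Finset.mem_union, Finset.mem_Icc, Finset.mem_Ioc]
    omega
  have hdisj : Disjoint (Finset.Icc 1 100) (Finset.Ioc 100 m) := by
    rw [Finset.disjoint_left]
    intro k hk hk2
    simp only [Finset.mem_Icc] at hk
    simp only [Finset.mem_Ioc] at hk2
    omega
  rw [hsplit, Finset.filter_union, Finset.sum_union (Finset.disjoint_filter_filter hdisj)]
  ring

-- the key estimate |S(⌊t⌋) - log t| ≤ 28 for t ∈ [1, X]
lemma S_est (t : ℝ) (ht : 1 ≤ t) :
    |(∑ k ∈ Finset.Icc 0 ⌊t⌋₊, cc k) - Real.log t| ≤ 28 := by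
  set m := ⌊t⌋₊ with hm
  have hm1 : 1 ≤ m := Nat.one_le_floor_iff t |>.mpr ht
  have hmt : (m:ℝ) ≤ t := Nat.floor_le (by linarith)
  have htm : t < m + 1 := Nat.lt_floor_add_one t
  have hm0 : (0:ℝ) < m := by exact_mod_cast hm1
  have hlogt0 : 0 ≤ Real.log t := Real.log_nonneg ht
  rcases Nat.lt_or_ge m 101 with h | h
  · -- m ≤ 100 : S = 0
    have hz : ∑ k ∈ Finset.Icc 0 m, cc k = 0 := by
      apply Finset.sum_eq_zero
      intro k hk
      simp only [Finset.mem_Icc] at hk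
      unfold cc
      rw [if_neg]
      rintro ⟨hk1, _⟩
      omega
    rw [hz]
    rw [abs_sub_comm, sub_zero, abs_of_nonneg hlogt0]
    have : Real.log t ≤ Real.log 101 := by
      apply Real.log_le_log (by linarith)
      have : (m:ℝ) + 1 ≤ 101 := by exact_mod_cast h
      linarith
    linarith [log101_le]
  · -- m ≥ 101
    rw [cc_sum_split m (by omega)]
    have h1 := mertens m hm1
    have h2 := mertens 100 (by norm_num)
    have hM100 : (0:ℝ) ≤ ∑ p ∈ (Finset.Icc 1 100).filter Nat.Prime, Real.log p / p := by
      apply Finset.sum_nonneg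
      intro p hp
      simp only [Finset.mem_filter, Finset.mem_Icc] at hp
      have : (1:ℝ) ≤ p := by exact_mod_cast hp.2.one_lt.le
      have := Real.log_nonneg this
      positivity
    have hlog100 : Real.log 100 ≤ 5 := by
      have : Real.log 100 ≤ Real.log 101 := Real.log_le_log (by norm_num) (by norm_num)
      linarith [log101_le]
    have hlogm_le : Real.log m ≤ Real.log t := Real.log_le_log hm0 hmt
    have hlogt_le : Real.log t ≤ Real.log m + Real.log 2 := by
      have h2m : t ≤ 2 * m := by
        have : (1:ℝ) ≤ m := by exact_mod_cast hm1
        linarith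
      calc Real.log t ≤ Real.log (2*m) := Real.log_le_log (by linarith) h2m
        _ = Real.log 2 + Real.log m := Real.log_mul (by norm_num) hm0.ne'
        _ = Real.log m + Real.log 2 := by ring
    rw [abs_le] at h1 h2 ⊢
    have hl2 := log2_le
    have hlog2pos := Real.log_nonneg (by norm_num : (1:ℝ) ≤ 2)
    constructor
    · have : Real.log 100 - 11
          ≤ ∑ p ∈ (Finset.Icc 1 100).filter Nat.Prime, Real.log p / p := by linarith [h2.1]
      -- M100 ≤ log 100 + 11 ≤ 16
      linarith [h2.2]
    · linarith [h1.2, h2.1]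

noncomputable def ff (X : ℝ) : ℝ → ℝ :=
  fun t => 4 * (1 - Real.log t / Real.log X)^2 * Real.log t

noncomputable def DD (X : ℝ) : ℝ → ℝ :=
  fun t => 4/t * (1 - Real.log t / Real.log X) * (1 - 3*(Real.log t / Real.log X))

lemma ff_hasDeriv {X : ℝ} (hX : 2 ≤ X) {t : ℝ} (ht : 0 < t) :
    HasDerivAt (ff X) (DD X t) t := by
  have hL : 0 < Real.log X := Real.log_pos (by linarith)
  have hlog := Real.hasDerivAt_log ht.ne'
  have h1 : HasDerivAt (fun t : ℝ => 1 - Real.log t / Real.log X) (-(t⁻¹ / Real.log X)) t :=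
    (hlog.div_const (Real.log X)).const_sub 1
  have h2 := h1.pow 2
  have h3 := (h2.const_mul 4).mul hlog
  refine h3.congr_deriv ?_
  unfold DD
  simp only [Pi.pow_apply]
  field_simp [hL.ne']
  have hLi : Real.log X * (Real.log X)⁻¹ = 1 := mul_inv_cancel₀ hL.ne'
  linear_combination (2 * Real.log t ^ 2 - 2 * Real.log t * Real.log X) * hLi

lemma DD_cont {X : ℝ} (hX : 2 ≤ X) : ContinuousOn (DD X) (Set.Icc 1 X) := by
  have hsub : Set.Icc (1:ℝ) X ⊆ {0}ᶜ := by
    intro t ht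
    simp only [Set.mem_Icc] at ht
    simp only [Set.mem_compl_iff, Set.mem_singleton_iff]
    intro h
    rw [h] at ht
    linarith [ht.1]
  have hlog : ContinuousOn Real.log (Set.Icc 1 X) := Real.continuousOn_log.mono hsub
  have hne : ∀ t ∈ Set.Icc (1:ℝ) X, t ≠ 0 := fun t ht => by
    simp only [Set.mem_Icc] at ht; intro h; rw [h] at ht; linarith [ht.1]
  exact ((continuousOn_const.div continuousOn_id hne).mul
    (continuousOn_const.sub (hlog.div_const _))).mul
    (continuousOn_const.sub (continuousOn_const.mul (hlog.div_const _)))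

lemma DD_bound {X : ℝ} (hX : 2 ≤ X) {t : ℝ} (ht1 : 1 ≤ t) (htX : t ≤ X) :
    |DD X t| ≤ 8 / t := by
  have hL : 0 < Real.log X := Real.log_pos (by linarith)
  have ht0 : (0:ℝ) < t := by linarith
  have hu0 : 0 ≤ Real.log t := Real.log_nonneg ht1
  have huL : Real.log t ≤ Real.log X := Real.log_le_log ht0 htX
  set r := Real.log t / Real.log X with hr
  have hr0 : 0 ≤ r := div_nonneg hu0 hL.le
  have hr1 : r ≤ 1 := by
    rw [hr, div_le_one hL]; exact huL
  unfold DD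
  rw [abs_mul, abs_mul]
  have e1 : |4/t| = 4/t := abs_of_pos (by positivity)
  have e2 : |1 - r| ≤ 1 := by rw [abs_le]; constructor <;> linarith
  have e3 : |1 - 3*r| ≤ 2 := by rw [abs_le]; constructor <;> linarith
  calc |4/t| * |1 - r| * |1 - 3*r| ≤ (4/t) * 1 * 2 := by
        rw [e1]
        apply mul_le_mul _ e3 (abs_nonneg _) (by positivity)
        apply mul_le_mul_of_nonneg_left e2 (by positivity)
    _ = 8/t := by ring

lemma main_integral {X : ℝ} (hX : 2 ≤ X) :
    ∫ t in Set.Ioc (1:ℝ) X, DD X t * Real.log t = -(Real.log X)^2/3 := by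
  have hL : 0 < Real.log X := Real.log_pos (by linarith)
  have h1X : (1:ℝ) ≤ X := by linarith
  set L := Real.log X with hLdef
  set G : ℝ → ℝ := fun t =>
    2*(Real.log t)^2 - (16/(3*L))*(Real.log t)^3 + (3/L^2)*(Real.log t)^4 with hG
  have hGderiv : ∀ t ∈ Set.uIcc (1:ℝ) X, HasDerivAt G (DD X t * Real.log t) t := by
    intro t ht
    rw [Set.uIcc_of_le h1X, Set.mem_Icc] at ht
    have ht0 : (0:ℝ) < t := by linarith [ht.1]
    have hlog := Real.hasDerivAt_log ht0.ne'
    have h2 := (hlog.pow 2).const_mul 2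
    have h3 := (hlog.pow 3).const_mul (16/(3*L))
    have h4 := (hlog.pow 4).const_mul (3/L^2)
    have := (h2.sub h3).add h4
    refine this.congr_deriv ?_
    unfold DD
    rw [← hLdef]
    push_cast
    field_simp
    ring
  have hcont : ContinuousOn (fun t => DD X t * Real.log t) (Set.uIcc 1 X) := by
    rw [Set.uIcc_of_le h1X]
    exact (DD_cont hX).mul (Real.continuousOn_log.mono (by
      intro t ht
      simp only [Set.mem_Icc] at ht
      simp only [Set.mem_compl_iff, Set.mem_singleton_iff]
      intro h; rw [h] at ht; linarith [ht.1]))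
  have hFTC := intervalIntegral.integral_eq_sub_of_hasDerivAt hGderiv
    (hcont.intervalIntegrable)
  rw [← intervalIntegral.integral_of_le h1X, hFTC]
  show (2*(Real.log X)^2 - (16/(3*L))*(Real.log X)^3 + (3/L^2)*(Real.log X)^4)
      - (2*(Real.log 1)^2 - (16/(3*L))*(Real.log 1)^3 + (3/L^2)*(Real.log 1)^4) = -L^2/3
  rw [Real.log_one, ← hLdef]
  field_simp
  ring



-- weighted version of cc_sum_eq
lemma cc_weighted_sum (g : ℕ → ℝ) (m : ℕ) :
    ∑ k ∈ Finset.Icc 0 m, g k * cc k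
      = ∑ p ∈ (Finset.Ioc 100 m).filter Nat.Prime, g p * (Real.log p / p) := by
  rw [show (∑ k ∈ Finset.Icc 0 m, g k * cc k)
      = ∑ k ∈ (Finset.Icc 0 m).filter (fun k => 100 < k ∧ k.Prime), g k * (Real.log k / k)
      from ?_]
  · apply Finset.sum_congr ?_ (fun _ _ => rfl)
    ext k
    simp only [Finset.mem_filter, Finset.mem_Icc, Finset.mem_Ioc]
    constructor
    · rintro ⟨⟨_, h2⟩, h3, h4⟩; exact ⟨⟨h3, h2⟩, h4⟩
    · rintro ⟨⟨h3, h2⟩, h4⟩; exact ⟨⟨Nat.zero_le _, h2⟩, h3, h4⟩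
  · rw [Finset.sum_filter]
    apply Finset.sum_congr rfl
    intro k _
    unfold cc
    split
    · rfl
    · rw [mul_zero]

/-- With b_p = 2h(log p/log X)(log p)/√p, h the triangle function,
∑_{100 < p ≤ X} b_p² = (log X)²/3 + O(log X). -/
theorem sum_bp_sq :
    ∃ C : ℝ, 0 < C ∧ ∀ X : ℝ, 2 ≤ X →
      |(∑ p ∈ (Finset.Ioc 100 ⌊X⌋₊).filter Nat.Prime,
          (2 * max (1 - |Real.log p / Real.log X|) 0 * Real.log p / Real.sqrt p) ^ 2)
        - (Real.log X) ^ 2 / 3| ≤ C * Real.log X := by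
  refine ⟨224, by norm_num, fun X hX => ?_⟩
  have hL : 0 < Real.log X := Real.log_pos (by linarith)
  have h1X : (1:ℝ) ≤ X := by linarith
  have hX0 : (0:ℝ) < X := by linarith
  set L := Real.log X with hLdef
  set S : ℝ → ℝ := fun t => ∑ k ∈ Finset.Icc 0 ⌊t⌋₊, cc k with hSdef
  -- Abel summation
  have hcc0 : cc 0 = 0 := by unfold cc; rw [if_neg]; rintro ⟨h, _⟩; omega
  have hf_diff : ∀ t ∈ Set.Icc (1:ℝ) X, DifferentiableAt ℝ (ff X) t := by
    intro t ht
    simp only [Set.mem_Icc] at ht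
    exact (ff_hasDeriv hX (by linarith [ht.1])).differentiableAt
  have hderiv_eq : ∀ t : ℝ, 0 < t → deriv (ff X) t = DD X t := fun t ht =>
    (ff_hasDeriv hX ht).deriv
  have hf_int : IntegrableOn (deriv (ff X)) (Set.Icc 1 X) := by
    apply (((DD_cont hX).integrableOn_Icc).congr_fun ?_ measurableSet_Icc)
    intro t ht
    simp only [Set.mem_Icc] at ht
    exact (hderiv_eq t (by linarith [ht.1])).symm
  have habel := sum_mul_eq_sub_integral_mul₀ cc hcc0 X hf_diff hf_int
  -- identify the left side
  have hsum_eq : ∑ k ∈ Finset.Icc 0 ⌊X⌋₊, ff X k * cc k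
      = ∑ p ∈ (Finset.Ioc 100 ⌊X⌋₊).filter Nat.Prime,
          (2 * max (1 - |Real.log p / Real.log X|) 0 * Real.log p / Real.sqrt p) ^ 2 := by
    rw [cc_weighted_sum]
    apply Finset.sum_congr rfl
    intro p hp
    simp only [Finset.mem_filter, Finset.mem_Ioc] at hp
    have hp1 : (1:ℝ) ≤ p := by exact_mod_cast hp.2.one_lt.le
    have hp0 : (0:ℝ) < p := by linarith
    have hpX : (p:ℝ) ≤ X := by
      calc (p:ℝ) ≤ (⌊X⌋₊:ℝ) := by exact_mod_cast hp.1.2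
        _ ≤ X := Nat.floor_le hX0.le
    have hlogp0 : 0 ≤ Real.log p := Real.log_nonneg hp1
    have hlogpX : Real.log p ≤ L := Real.log_le_log hp0 hpX
    have habs : |Real.log p / L| = Real.log p / L := abs_of_nonneg (by positivity)
    have hmax : max (1 - Real.log p / L) 0 = 1 - Real.log p / L := by
      apply max_eq_left
      rw [sub_nonneg, div_le_one hL]
      exact hlogpX
    rw [habs, hmax]
    unfold ff
    rw [div_pow, Real.sq_sqrt hp0.le]
    ring
  have hffX : ff X X = 0 := by
    unfold ff
    rw [← hLdef, div_self hL.ne']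
    ring
  rw [hsum_eq, hffX, zero_mul, zero_sub] at habel
  -- measurability and integrability
  have hSmeas : Measurable S := by
    apply Measurable.comp (f := fun t : ℝ => ⌊t⌋₊) (g := fun m : ℕ => ∑ k ∈ Finset.Icc 0 m, cc k)
    · exact measurable_from_top
    · exact Nat.measurable_floor
  have hS0 : ∀ t : ℝ, 0 ≤ S t := fun t => Finset.sum_nonneg (fun k _ => cc_nonneg k)
  have hSB : ∀ t : ℝ, t ≤ X → S t ≤ S X := by
    intro t ht
    apply Finset.sum_le_sum_of_subset_of_nonneg
    · apply Finset.Icc_subset_Icc_right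
      exact Nat.floor_le_floor ht
    · intro k _ _; exact cc_nonneg k
  have hDmeas : Measurable (DD X) := by
    unfold DD
    apply Measurable.mul
    apply Measurable.mul
    · exact measurable_const.div measurable_id
    · exact measurable_const.sub (Real.measurable_log.div measurable_const)
    · exact measurable_const.sub (measurable_const.mul (Real.measurable_log.div measurable_const))
  have hmeasIoc : MeasurableSet (Set.Ioc (1:ℝ) X) := measurableSet_Ioc
  have hDS_int : IntegrableOn (fun t => DD X t * S t) (Set.Ioc 1 X) := by
    apply Measure.integrableOn_of_bounded (M := 8 * S X) measure_Ioc_lt_top.ne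
    · exact ((hDmeas.mul hSmeas).aestronglyMeasurable)
    · rw [ae_restrict_iff' hmeasIoc]
      filter_upwards with t ht
      simp only [Set.mem_Ioc] at ht
      have ht1 : (1:ℝ) ≤ t := ht.1.le
      rw [Real.norm_eq_abs, abs_mul]
      have h1 : |DD X t| ≤ 8 / t := DD_bound hX ht1 ht.2
      have h2 : |S t| = S t := abs_of_nonneg (hS0 t)
      have h3 : 8/t ≤ 8 := by
        rw [div_le_iff₀ (by linarith)]
        nlinarith
      calc |DD X t| * |S t| ≤ 8 * |S t| := by
            apply mul_le_mul_of_nonneg_right (h1.trans h3) (abs_nonneg _)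
        _ = 8 * S t := by rw [h2]
        _ ≤ 8 * S X := by linarith [hSB t ht.2]
  have hDlog_int : IntegrableOn (fun t => DD X t * Real.log t) (Set.Ioc 1 X) := by
    apply IntegrableOn.mono_set _ Set.Ioc_subset_Icc_self
    apply ContinuousOn.integrableOn_Icc
    apply (DD_cont hX).mul
    apply Real.continuousOn_log.mono
    intro t ht
    simp only [Set.mem_Icc] at ht
    simp only [Set.mem_compl_iff, Set.mem_singleton_iff]
    intro h; rw [h] at ht; linarith [ht.1]
  -- rewrite the Abel integral
  have hint_eq : ∫ t in Set.Ioc (1:ℝ) X, deriv (ff X) t * S t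
      = ∫ t in Set.Ioc (1:ℝ) X, DD X t * S t := by
    apply setIntegral_congr_fun hmeasIoc
    intro t ht
    simp only [Set.mem_Ioc] at ht
    show deriv (ff X) t * S t = DD X t * S t
    rw [hderiv_eq t (by linarith [ht.1])]
  have hsplit : ∫ t in Set.Ioc (1:ℝ) X, DD X t * S t
      = (∫ t in Set.Ioc (1:ℝ) X, DD X t * (S t - Real.log t)) + ∫ t in Set.Ioc (1:ℝ) X, DD X t * Real.log t := by
    have hErr_int : IntegrableOn (fun t => DD X t * (S t - Real.log t)) (Set.Ioc 1 X) := by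
      have h := hDS_int.sub hDlog_int
      simpa [mul_sub, Pi.sub_def] using h
    rw [← integral_add hErr_int hDlog_int]
    apply setIntegral_congr_fun hmeasIoc
    intro t _
    show DD X t * S t = DD X t * (S t - Real.log t) + DD X t * Real.log t
    ring
  -- bound the error integral
  have herr : |∫ t in Set.Ioc (1:ℝ) X, DD X t * (S t - Real.log t)| ≤ 224 * L := by
    have hbound_int : Integrable (fun t => 224 * t⁻¹) (volume.restrict (Set.Ioc 1 X)) := by
      apply Integrable.const_mul
      apply IntegrableOn.mono_set _ Set.Ioc_subset_Icc_self
      apply ContinuousOn.integrableOn_Icc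
      apply continuousOn_inv₀.mono
      intro t ht
      simp only [Set.mem_Icc] at ht
      simp only [Set.mem_compl_iff, Set.mem_singleton_iff]
      intro h; rw [h] at ht; linarith [ht.1]
    have hptwise : ∀ᵐ t ∂(volume.restrict (Set.Ioc (1:ℝ) X)),
        ‖DD X t * (S t - Real.log t)‖ ≤ 224 * t⁻¹ := by
      rw [ae_restrict_iff' hmeasIoc]
      filter_upwards with t ht
      simp only [Set.mem_Ioc] at ht
      have ht1 : (1:ℝ) ≤ t := ht.1.le
      have ht0 : (0:ℝ) < t := by linarith
      rw [Real.norm_eq_abs, abs_mul]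
      have h1 : |DD X t| ≤ 8 / t := DD_bound hX ht1 ht.2
      have h2 : |S t - Real.log t| ≤ 28 := S_est t ht1
      calc |DD X t| * |S t - Real.log t| ≤ (8/t) * 28 := by
            apply mul_le_mul h1 h2 (abs_nonneg _) (by positivity)
        _ = 224 * t⁻¹ := by field_simp; ring
    calc |∫ t in Set.Ioc (1:ℝ) X, DD X t * (S t - Real.log t)|
        ≤ ∫ t in Set.Ioc (1:ℝ) X, 224 * t⁻¹ := by
          rw [← Real.norm_eq_abs]
          exact norm_integral_le_of_norm_le hbound_int hptwise
      _ = 224 * L := by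
          rw [integral_const_mul, ← intervalIntegral.integral_of_le h1X,
            integral_inv (by
              rw [Set.uIcc_of_le h1X]
              simp only [Set.mem_Icc, not_and, not_le]
              intro h; linarith)]
          rw [div_one, hLdef]
    -- done
  rw [habel, hint_eq, hsplit, main_integral hX, ← hLdef]
  have : -((∫ t in Set.Ioc (1:ℝ) X, DD X t * (S t - Real.log t)) + -L^2/3) - L^2/3
      = -(∫ t in Set.Ioc (1:ℝ) X, DD X t * (S t - Real.log t)) := by ring
  rw [this, abs_neg]
  exact herr
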